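/- Let 0<ν<1 and define ψ(z) = (sin πν/π) ∫_0^∞ s^{-ν} (1−e^{-s}) / (s(1−e^{-z-s})) ds. Then for every z = x+iy with x≥0 and 0<y<π, one has Re ψ(x+iy) ≥ 1/(2Γ(1+ν)) and Im ψ(x+iy) < 0. Moreover, for every real x, ψ(x+iπ) = (sin πν/π) ∫_0^∞ s^{-ν}(1−e^{-s})/(s(1+e^{-x-s})) ds is real and strictly positive. -/

import Mathlib

open MeasureTheory

/-- Analytic continuation of the DG generating function `ψ` to the cut strip:
`ψ(z) = (sin πν / π) ∫_0^∞ s^{-ν} (1 − e^{-s}) / (s (1 − e^{-z-s})) ds`. -/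
noncomputable def psiC (ν : ℝ) (z : ℂ) : ℂ :=
  (Real.sin (Real.pi * ν) / Real.pi : ℝ) *
    ∫ s in Set.Ioi (0 : ℝ),
      (↑(s ^ (-ν)) * (1 - Complex.exp (-(s : ℂ)))) / ((s : ℂ) * (1 - Complex.exp (-z - (s : ℂ))))

namespace Stmt14Aux

open Set Filter

noncomputable def G (ν : ℝ) (s : ℝ) : ℝ := s ^ (-ν - 1) * (1 - Real.exp (-s))

lemma one_sub_exp_le (s : ℝ) : 1 - Real.exp (-s) ≤ s := by
  nlinarith [Real.add_one_le_exp (-s)]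

lemma one_sub_exp_pos {s : ℝ} (hs : 0 < s) : 0 < 1 - Real.exp (-s) := by
  have : Real.exp (-s) < Real.exp 0 := Real.exp_lt_exp.2 (by linarith)
  simp only [Real.exp_zero] at this; linarith

lemma G_pos {ν s : ℝ} (hs : 0 < s) : 0 < G ν s :=
  mul_pos (Real.rpow_pos_of_pos hs _) (one_sub_exp_pos hs)

lemma rpow_shift {ν s : ℝ} (hs : 0 < s) : s ^ (-ν - 1) * s = s ^ (-ν) := by
  have := Real.rpow_add_one (ne_of_gt hs) (-ν - 1)
  rw [show -ν - 1 + 1 = -ν by ring] at this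
  linarith [this]

lemma G_eq {ν s : ℝ} (hs : 0 < s) : G ν s = s ^ (-ν) * (1 - Real.exp (-s)) / s := by
  rw [G, eq_div_iff (ne_of_gt hs)]
  rw [show s ^ (-ν - 1) * (1 - Real.exp (-s)) * s
      = s ^ (-ν - 1) * s * (1 - Real.exp (-s)) by ring, rpow_shift hs]

lemma contAt_G {ν s : ℝ} (hs : s ≠ 0) : ContinuousAt (G ν) s := by
  apply ContinuousAt.mul
  · exact Real.continuousAt_rpow_const s _ (Or.inl hs)
  · fun_prop

lemma integrableOn_G {ν : ℝ} (hν0 : 0 < ν) (hν1 : ν < 1) :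
    IntegrableOn (G ν) (Set.Ioi 0) := by
  rw [← Set.Ioc_union_Ioi_eq_Ioi (zero_le_one (α := ℝ)), integrableOn_union]
  constructor
  · have hint : IntegrableOn (fun s : ℝ => s ^ (-ν)) (Set.Ioc 0 1) := by
      rw [← intervalIntegrable_iff_integrableOn_Ioc_of_le zero_le_one]
      exact intervalIntegral.intervalIntegrable_rpow' (by linarith)
    have hco : ContinuousOn (G ν) (Set.Ioc 0 1) :=
      fun s hs => (contAt_G (ne_of_gt hs.1)).continuousWithinAt
    apply hint.mono' (hco.aestronglyMeasurable measurableSet_Ioc)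
    filter_upwards [ae_restrict_mem measurableSet_Ioc] with s hs
    have hs0 := hs.1
    have h1 : 0 ≤ 1 - Real.exp (-s) := (one_sub_exp_pos hs0).le
    rw [Real.norm_eq_abs, abs_of_nonneg (G_pos hs0).le, G]
    calc s ^ (-ν - 1) * (1 - Real.exp (-s)) ≤ s ^ (-ν - 1) * s :=
          mul_le_mul_of_nonneg_left (one_sub_exp_le s) (Real.rpow_nonneg hs0.le _)
      _ = s ^ (-ν) := rpow_shift hs0
  · have hint : IntegrableOn (fun s : ℝ => s ^ (-ν - 1)) (Set.Ioi 1) :=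
      integrableOn_Ioi_rpow_of_lt (by linarith) one_pos
    have hco : ContinuousOn (G ν) (Set.Ioi 1) :=
      fun s hs => (contAt_G (ne_of_gt (lt_trans one_pos hs))).continuousWithinAt
    apply hint.mono' (hco.aestronglyMeasurable measurableSet_Ioi)
    filter_upwards [ae_restrict_mem measurableSet_Ioi] with s hs
    have hs0 : (0:ℝ) < s := lt_trans one_pos hs
    rw [Real.norm_eq_abs, abs_of_nonneg (G_pos hs0).le, G]
    nlinarith [Real.rpow_pos_of_pos hs0 (-ν - 1), Real.exp_pos (-s),
      (one_sub_exp_pos hs0).le]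

lemma integral_G {ν : ℝ} (hν0 : 0 < ν) (hν1 : ν < 1) :
    ∫ s in Set.Ioi (0:ℝ), G ν s = Real.Gamma (1 - ν) / ν := by
  set F : ℝ → ℝ := fun s => (-1/ν) * (s ^ (-ν) * (1 - Real.exp (-s))) with hF
  have hGamma : IntegrableOn (fun s : ℝ => Real.exp (-s) * s ^ (-ν)) (Set.Ioi 0) := by
    have := Real.GammaIntegral_convergent (by linarith : (0:ℝ) < 1 - ν)
    simpa [show (1:ℝ) - ν - 1 = -ν by ring] using this
  have hderiv : ∀ s ∈ Set.Ioi (0:ℝ),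
      HasDerivAt F (G ν s - (1/ν) * (Real.exp (-s) * s ^ (-ν))) s := by
    intro s hs
    have hs0 : (0:ℝ) < s := hs
    have hp : HasDerivAt (fun t : ℝ => t ^ (-ν)) (-ν * s ^ (-ν - 1)) s := by
      simpa [show -ν - 1 = -ν - 1 by ring] using
        Real.hasDerivAt_rpow_const (p := -ν) (Or.inl hs0.ne')
    have hq : HasDerivAt (fun t : ℝ => 1 - Real.exp (-t)) (Real.exp (-s)) s := by
      have h1 : HasDerivAt (fun t : ℝ => Real.exp (-t)) (Real.exp (-s) * (-1)) s :=
        (Real.hasDerivAt_exp (-s)).comp s (by simpa using (hasDerivAt_neg s))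
      simpa using h1.const_sub 1
    have := ((hp.mul hq).const_mul (-1/ν))
    refine this.congr_deriv ?_
    symm
    rw [G]
    field_simp
    ring
  have f'int : IntegrableOn
      (fun s => G ν s - (1/ν) * (Real.exp (-s) * s ^ (-ν))) (Set.Ioi 0) :=
    (integrableOn_G hν0 hν1).sub (hGamma.const_mul _)
  have hcont : ContinuousWithinAt F (Set.Ici 0) 0 := by
    have hF0 : F 0 = 0 := by simp [hF]
    rw [ContinuousWithinAt, hF0]
    refine squeeze_zero_norm' (f := F) (a := fun s => (1/ν) * s ^ (1 - ν)) ?_ ?_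
    · filter_upwards [self_mem_nhdsWithin] with s (hs : (0:ℝ) ≤ s)
      rcases eq_or_lt_of_le hs with h | h
      · simp [hF, ← h, Real.zero_rpow (by linarith : -ν ≠ 0),
          Real.zero_rpow (by linarith : (1:ℝ) - ν ≠ 0)]
      · have h1 : 0 ≤ 1 - Real.exp (-s) := (one_sub_exp_pos h).le
        have hQ : 0 ≤ s ^ (-ν) * (1 - Real.exp (-s)) :=
          mul_nonneg (Real.rpow_nonneg hs _) h1
        have hnorm : ‖F s‖ = (1/ν) * (s ^ (-ν) * (1 - Real.exp (-s))) := by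
          rw [Real.norm_eq_abs, hF]
          rw [show ((fun s => -1 / ν * (s ^ (-ν) * (1 - Real.exp (-s)))) s)
              = -1 / ν * (s ^ (-ν) * (1 - Real.exp (-s))) from rfl]
          rw [abs_mul, abs_of_nonneg hQ, abs_div, abs_neg, abs_one, abs_of_pos hν0]
        rw [hnorm]
        have h2 : s ^ (-ν) * (1 - Real.exp (-s)) ≤ s ^ (-ν) * s :=
          mul_le_mul_of_nonneg_left (one_sub_exp_le s) (Real.rpow_nonneg hs _)
        have h3 : s ^ (-ν) * s = s ^ (1 - ν) := by
          rw [← Real.rpow_add_one (ne_of_gt h) (-ν)]; ring_nf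
        have : s ^ (-ν) * (1 - Real.exp (-s)) ≤ s ^ (1 - ν) := h3 ▸ h2
        exact mul_le_mul_of_nonneg_left this (by positivity)
    · have hc : ContinuousAt (fun s : ℝ => (1/ν) * s ^ (1 - ν)) 0 :=
        continuousAt_const.mul
          (Real.continuousAt_rpow_const 0 (1 - ν) (Or.inr (by linarith)))
      have h0 : (fun s : ℝ => (1/ν) * s ^ (1 - ν)) 0 = 0 := by
        simp [Real.zero_rpow (by linarith : (1:ℝ) - ν ≠ 0)]
      have ht : Tendsto (fun s : ℝ => (1/ν) * s ^ (1 - ν)) (nhds 0) (nhds 0) := by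
        simpa [Real.zero_rpow (by linarith : (1:ℝ) - ν ≠ 0)] using hc.tendsto
      exact ht.mono_left nhdsWithin_le_nhds
  have htop : Tendsto F atTop (nhds 0) := by
    have h1 : Tendsto (fun s : ℝ => s ^ (-ν) * (1 - Real.exp (-s))) atTop (nhds (0 * (1 - 0))) :=
      (tendsto_rpow_neg_atTop hν0).mul
        (tendsto_const_nhds.sub Real.tendsto_exp_neg_atTop_nhds_zero)
    have := h1.const_mul (-1/ν)
    simpa using this
  have key := MeasureTheory.integral_Ioi_of_hasDerivAt_of_tendsto hcont hderiv f'int htop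
  have hF0 : F 0 = 0 := by simp [hF]
  rw [hF0, sub_zero] at key
  rw [integral_sub (integrableOn_G hν0 hν1) (hGamma.const_mul _),
    MeasureTheory.integral_const_mul] at key
  have hGval : ∫ s in Set.Ioi (0:ℝ), Real.exp (-s) * s ^ (-ν) = Real.Gamma (1 - ν) := by
    rw [Real.Gamma_eq_integral (by linarith : (0:ℝ) < 1 - ν)]
    congr 1; ext s; rw [show (1:ℝ) - ν - 1 = -ν by ring]
  rw [hGval] at key
  field_simp at key ⊢
  linarith

lemma const_eq {ν : ℝ} (hν0 : 0 < ν) (hν1 : ν < 1) :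
    Real.sin (Real.pi * ν) / Real.pi * (1/2 * (Real.Gamma (1 - ν) / ν))
      = 1 / (2 * Real.Gamma (1 + ν)) := by
  have hΓν : 0 < Real.Gamma ν := Real.Gamma_pos_of_pos hν0
  have hΓ1ν : 0 < Real.Gamma (1 - ν) := Real.Gamma_pos_of_pos (by linarith)
  have hsin : 0 < Real.sin (Real.pi * ν) :=
    Real.sin_pos_of_pos_of_lt_pi (by positivity)
      (by nlinarith [Real.pi_pos])
  have hrefl := Real.Gamma_mul_Gamma_one_sub ν
  have hadd : Real.Gamma (1 + ν) = ν * Real.Gamma ν := by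
    rw [add_comm, Real.Gamma_add_one hν0.ne']
  rw [hadd]
  have hπ := Real.pi_pos
  have hrefl' : Real.Gamma ν * Real.Gamma (1 - ν) * Real.sin (Real.pi * ν) = Real.pi := by
    rw [hrefl, div_mul_cancel₀ _ hsin.ne']
  field_simp
  nlinarith [hrefl']

lemma sin_div_pi_pos {ν : ℝ} (hν0 : 0 < ν) (hν1 : ν < 1) :
    0 < Real.sin (Real.pi * ν) / Real.pi := by
  have hπ := Real.pi_pos
  have hsin : 0 < Real.sin (Real.pi * ν) :=
    Real.sin_pos_of_pos_of_lt_pi (by positivity) (by nlinarith)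
  positivity

noncomputable def u (x y s : ℝ) : ℂ :=
  1 - Complex.exp (-((x:ℂ) + (y:ℂ) * Complex.I) - (s:ℂ))

lemma u_re (x y s : ℝ) : (u x y s).re = 1 - Real.exp (-x - s) * Real.cos y := by
  simp [u, Complex.exp_re, Real.cos_neg, Real.sin_neg]

lemma u_im (x y s : ℝ) : (u x y s).im = Real.exp (-x - s) * Real.sin y := by
  simp [u, Complex.exp_im, Real.cos_neg, Real.sin_neg]

lemma normSq_u_ge (x y s : ℝ) : Real.sin y ^ 2 ≤ Complex.normSq (u x y s) := by
  rw [Complex.normSq_apply, u_re, u_im]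
  nlinarith [Real.sin_sq_add_cos_sq y, sq_nonneg (Real.exp (-x - s) - Real.cos y),
    sq_nonneg (Real.exp (-x - s)), Real.exp_pos (-x - s)]

end Stmt14Aux

theorem stmt14 (ν : ℝ) (hν0 : 0 < ν) (hν1 : ν < 1) :
    (∀ x y : ℝ, 0 ≤ x → 0 < y → y < Real.pi →
      1 / (2 * Real.Gamma (1 + ν)) ≤ (psiC ν ((x : ℂ) + (y : ℂ) * Complex.I)).re ∧
      (psiC ν ((x : ℂ) + (y : ℂ) * Complex.I)).im < 0) ∧
    ∀ x : ℝ,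
      psiC ν ((x : ℂ) + (Real.pi : ℂ) * Complex.I)
        = ((Real.sin (Real.pi * ν) / Real.pi *
            ∫ s in Set.Ioi (0 : ℝ),
              s ^ (-ν) * (1 - Real.exp (-s)) / (s * (1 + Real.exp (-x - s))) : ℝ) : ℂ) ∧
      0 < Real.sin (Real.pi * ν) / Real.pi *
            ∫ s in Set.Ioi (0 : ℝ),
              s ^ (-ν) * (1 - Real.exp (-s)) / (s * (1 + Real.exp (-x - s))) := by
  have hGint := Stmt14Aux.integrableOn_G hν0 hν1
  have hc := Stmt14Aux.sin_div_pi_pos hν0 hν1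
  constructor
  · intro x y hx hy0 hyπ
    set z : ℂ := (x:ℂ) + (y:ℂ) * Complex.I with hz
    have hsiny : 0 < Real.sin y := Real.sin_pos_of_pos_of_lt_pi hy0 hyπ
    have hNS : ∀ s : ℝ, 0 < Complex.normSq (Stmt14Aux.u x y s) := fun s =>
      lt_of_lt_of_le (by positivity) (Stmt14Aux.normSq_u_ge x y s)
    have hune : ∀ s : ℝ, Stmt14Aux.u x y s ≠ 0 := fun s => Complex.normSq_pos.mp (hNS s)
    set H : ℝ → ℂ := fun s =>
      (↑(s ^ (-ν)) * (1 - Complex.exp (-(s : ℂ)))) /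
        ((s : ℂ) * (1 - Complex.exp (-z - (s : ℂ)))) with hH
    have hHu : ∀ s : ℝ, 0 < s →
        H s = ((Stmt14Aux.G ν s : ℝ) : ℂ) * (Stmt14Aux.u x y s)⁻¹ := by
      intro s hs
      have h2 : Complex.exp (-(s:ℂ)) = ((Real.exp (-s) : ℝ) : ℂ) := by
        rw [show -(s:ℂ) = ((-s : ℝ) : ℂ) by push_cast; ring, ← Complex.ofReal_exp]
      have hu : (1 : ℂ) - Complex.exp (-z - (s:ℂ)) = Stmt14Aux.u x y s := by
        rw [hz, Stmt14Aux.u]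
      rw [hH]
      simp only
      rw [h2, hu, Stmt14Aux.G_eq hs]
      have hs' : (s:ℂ) ≠ 0 := Complex.ofReal_ne_zero.mpr (ne_of_gt hs)
      push_cast
      field_simp [hune s]
    have hrexp : ∀ s : ℝ, 0 < s → Real.exp (-x - s) < 1 := by
      intro s hs
      rw [← Real.exp_zero]
      exact Real.exp_lt_exp.2 (by linarith)
    have hre : ∀ s ∈ Set.Ioi (0:ℝ), 1/2 * Stmt14Aux.G ν s ≤ (H s).re := by
      intro s hs
      have hs0 : (0:ℝ) < s := hs
      rw [hHu s hs0, Complex.re_ofReal_mul, Complex.inv_re]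
      have hG := Stmt14Aux.G_pos (ν := ν) hs0
      have h2 : Complex.normSq (Stmt14Aux.u x y s) ≤ 2 * (Stmt14Aux.u x y s).re := by
        rw [Complex.normSq_apply, Stmt14Aux.u_re, Stmt14Aux.u_im]
        have hpyth := Real.sin_sq_add_cos_sq y
        have hr1 := hrexp s hs0
        have hr0 := Real.exp_pos (-x - s)
        have hsq : Real.exp (-x - s) ^ 2 < 1 := by nlinarith
        nlinarith [hpyth, hsq, hr0, sq_nonneg (Real.exp (-x - s))]
      have h3 : (1:ℝ)/2 ≤ (Stmt14Aux.u x y s).re / Complex.normSq (Stmt14Aux.u x y s) := by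
        rw [le_div_iff₀ (hNS s)]
        linarith
      calc 1/2 * Stmt14Aux.G ν s = Stmt14Aux.G ν s * (1/2) := by ring
        _ ≤ Stmt14Aux.G ν s *
            ((Stmt14Aux.u x y s).re / Complex.normSq (Stmt14Aux.u x y s)) :=
          mul_le_mul_of_nonneg_left h3 hG.le
    have him : ∀ s ∈ Set.Ioi (0:ℝ), (H s).im < 0 := by
      intro s hs
      have hs0 : (0:ℝ) < s := hs
      rw [hHu s hs0, Complex.im_ofReal_mul, Complex.inv_im]
      have hG := Stmt14Aux.G_pos (ν := ν) hs0
      have huim : 0 < (Stmt14Aux.u x y s).im := by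
        rw [Stmt14Aux.u_im]
        positivity
      exact mul_neg_of_pos_of_neg hG
        (div_neg_of_neg_of_pos (neg_neg_of_pos huim) (hNS s))
    have hnorm : ∀ s ∈ Set.Ioi (0:ℝ), ‖H s‖ ≤ Stmt14Aux.G ν s / Real.sin y := by
      intro s hs
      have hs0 : (0:ℝ) < s := hs
      have hG := Stmt14Aux.G_pos (ν := ν) hs0
      rw [hHu s hs0, norm_mul, Complex.norm_real, norm_inv,
        Real.norm_eq_abs, abs_of_nonneg hG.le]
      have habs : Real.sin y ≤ ‖Stmt14Aux.u x y s‖ := by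
        rw [Complex.norm_def]
        calc Real.sin y = Real.sqrt (Real.sin y ^ 2) := (Real.sqrt_sq hsiny.le).symm
          _ ≤ Real.sqrt (Complex.normSq (Stmt14Aux.u x y s)) :=
            Real.sqrt_le_sqrt (Stmt14Aux.normSq_u_ge x y s)
      rw [div_eq_mul_inv]
      exact mul_le_mul_of_nonneg_left (inv_anti₀ hsiny habs) hG.le
    have hcontH : ContinuousOn H (Set.Ioi 0) := by
      apply ContinuousOn.div
      · exact (Complex.continuous_ofReal.comp_continuousOn
          (fun s hs => (Real.continuousAt_rpow_const s _
            (Or.inl (ne_of_gt hs))).continuousWithinAt)).mul (by fun_prop)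
      · fun_prop
      · intro s hs
        apply mul_ne_zero (Complex.ofReal_ne_zero.mpr (ne_of_gt hs))
        have := hune s
        rw [Stmt14Aux.u, ← hz] at this
        exact this
    have hHint : IntegrableOn H (Set.Ioi 0) := by
      apply Integrable.mono' (hGint.div_const (Real.sin y))
        (hcontH.aestronglyMeasurable measurableSet_Ioi)
      filter_upwards [ae_restrict_mem measurableSet_Ioi] with s hs
      exact hnorm s hs
    have hpsi_re : (psiC ν z).re
        = Real.sin (Real.pi * ν) / Real.pi * (∫ s in Set.Ioi (0:ℝ), H s).re := by
      rw [psiC]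
      exact Complex.re_ofReal_mul _ _
    have hpsi_im : (psiC ν z).im
        = Real.sin (Real.pi * ν) / Real.pi * (∫ s in Set.Ioi (0:ℝ), H s).im := by
      rw [psiC]
      exact Complex.im_ofReal_mul _ _
    have hre_int : (∫ s in Set.Ioi (0:ℝ), H s).re = ∫ s in Set.Ioi (0:ℝ), (H s).re := by
      simpa using (integral_re hHint).symm
    have him_int : (∫ s in Set.Ioi (0:ℝ), H s).im = ∫ s in Set.Ioi (0:ℝ), (H s).im := by
      simpa using (integral_im hHint).symm
    constructor
    · calc 1 / (2 * Real.Gamma (1 + ν))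
          = Real.sin (Real.pi * ν) / Real.pi * (1/2 * (Real.Gamma (1 - ν) / ν)) :=
            (Stmt14Aux.const_eq hν0 hν1).symm
        _ ≤ Real.sin (Real.pi * ν) / Real.pi * ∫ s in Set.Ioi (0:ℝ), (H s).re := by
            apply mul_le_mul_of_nonneg_left _ hc.le
            have h1 : ∫ s in Set.Ioi (0:ℝ), 1/2 * Stmt14Aux.G ν s
                ≤ ∫ s in Set.Ioi (0:ℝ), (H s).re :=
              setIntegral_mono_on (hGint.const_mul _) hHint.re measurableSet_Ioi hre
            rw [MeasureTheory.integral_const_mul, Stmt14Aux.integral_G hν0 hν1] at h1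
            exact h1
        _ = (psiC ν z).re := by rw [hpsi_re, hre_int]
    · rw [hpsi_im, him_int]
      have hneg : 0 < ∫ s in Set.Ioi (0:ℝ), -(H s).im := by
        rw [setIntegral_pos_iff_support_of_nonneg_ae]
        · refine lt_of_lt_of_le ?_ (measure_mono
            (fun s hs => ⟨ne_of_gt (neg_pos.mpr (him s hs)), hs⟩ :
              Set.Ioi (0:ℝ) ⊆ Function.support (fun s => -(H s).im) ∩ Set.Ioi 0))
          rw [Real.volume_Ioi]
          exact ENNReal.zero_lt_top
        · filter_upwards [ae_restrict_mem measurableSet_Ioi] with s hs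
          exact (neg_pos.mpr (him s hs)).le
        · exact hHint.im.neg
      have h2 : ∫ s in Set.Ioi (0:ℝ), -(H s).im = -∫ s in Set.Ioi (0:ℝ), (H s).im :=
        integral_neg _
      exact mul_neg_of_pos_of_neg hc (by linarith [h2 ▸ hneg])
  · intro x
    set φ : ℝ → ℝ :=
      fun s => s ^ (-ν) * (1 - Real.exp (-s)) / (s * (1 + Real.exp (-x - s))) with hφ
    have hcast : ∀ s : ℝ,
        (↑(s ^ (-ν)) * (1 - Complex.exp (-(s : ℂ)))) /
          ((s : ℂ) * (1 - Complex.exp (-((x:ℂ) + (Real.pi:ℂ) * Complex.I) - (s : ℂ))))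
        = ((φ s : ℝ) : ℂ) := by
      intro s
      have hexp : Complex.exp (-((x:ℂ) + (Real.pi:ℂ) * Complex.I) - (s:ℂ))
          = -((Real.exp (-x - s) : ℝ) : ℂ) := by
        have h1 : -((x:ℂ) + (Real.pi:ℂ) * Complex.I) - (s:ℂ)
            = ((-x - s : ℝ) : ℂ) + -((Real.pi:ℂ) * Complex.I) := by push_cast; ring
        rw [h1, Complex.exp_add, Complex.exp_neg, Complex.exp_pi_mul_I]
        rw [← Complex.ofReal_exp]
        norm_num
      rw [hexp, hφ]
      have h2 : Complex.exp (-(s:ℂ)) = ((Real.exp (-s) : ℝ) : ℂ) := by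
        rw [show -(s:ℂ) = ((-s : ℝ) : ℂ) by push_cast; ring, ← Complex.ofReal_exp]
      rw [h2]
      push_cast
      ring
    have heq : psiC ν ((x : ℂ) + (Real.pi : ℂ) * Complex.I)
        = ((Real.sin (Real.pi * ν) / Real.pi * ∫ s in Set.Ioi (0:ℝ), φ s : ℝ) : ℂ) := by
      rw [psiC]
      simp_rw [hcast]
      have hio : ∫ s in Set.Ioi (0:ℝ), ((φ s : ℝ) : ℂ)
          = ((∫ s in Set.Ioi (0:ℝ), φ s : ℝ) : ℂ) := integral_ofReal
      rw [hio]
      norm_cast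
    refine ⟨heq, ?_⟩
    have hφpos : ∀ s : ℝ, s ∈ Set.Ioi (0:ℝ) → 0 < φ s := by
      intro s hs
      have hs0 : (0:ℝ) < s := hs
      have := Stmt14Aux.one_sub_exp_pos hs0
      have := Real.exp_pos (-x - s)
      rw [hφ]
      positivity
    have hφle : ∀ s : ℝ, s ∈ Set.Ioi (0:ℝ) → φ s ≤ Stmt14Aux.G ν s := by
      intro s hs
      have hs0 : (0:ℝ) < s := hs
      have hA : 0 ≤ s ^ (-ν) * (1 - Real.exp (-s)) :=
        mul_nonneg (Real.rpow_nonneg hs0.le _) (Stmt14Aux.one_sub_exp_pos hs0).le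
      have hr : 0 < Real.exp (-x - s) := Real.exp_pos _
      rw [hφ, Stmt14Aux.G_eq hs0]
      apply div_le_div_of_nonneg_left hA hs0
      nlinarith
    have hφcont : ContinuousOn φ (Set.Ioi 0) := by
      apply ContinuousOn.div
      · exact fun s hs => ((Real.continuousAt_rpow_const s _
          (Or.inl (ne_of_gt hs))).mul (by fun_prop)).continuousWithinAt
      · fun_prop
      · intro s hs
        have hs0 : (0:ℝ) < s := hs
        have hr : 0 < Real.exp (-x - s) := Real.exp_pos _
        positivity
    have hφint : IntegrableOn φ (Set.Ioi 0) := by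
      apply hGint.mono' (hφcont.aestronglyMeasurable measurableSet_Ioi)
      filter_upwards [ae_restrict_mem measurableSet_Ioi] with s hs
      rw [Real.norm_eq_abs, abs_of_nonneg (hφpos s hs).le]
      exact hφle s hs
    have hpos : 0 < ∫ s in Set.Ioi (0:ℝ), φ s := by
      rw [setIntegral_pos_iff_support_of_nonneg_ae]
      · refine lt_of_lt_of_le ?_ (measure_mono
          (fun s hs => ⟨ne_of_gt (hφpos s hs), hs⟩ :
            Set.Ioi (0:ℝ) ⊆ Function.support φ ∩ Set.Ioi 0))
        rw [Real.volume_Ioi]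
        exact ENNReal.zero_lt_top
      · filter_upwards [ae_restrict_mem measurableSet_Ioi] with s hs
        exact (hφpos s hs).le
      · exact hφint
    exact mul_pos hc hpos
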